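/- Let k be a real number and set D(u,v) = 1 + (1+k)u² + (1−k)v². Define the Ricci potentials 𝓡₁(u,v) = (1/√2)·(1 + (1+k)(u²+v²))/D(u,v) and 𝓡₂(u,v) = (1/√2)·(1 + (1−k)(u²+v²))/D(u,v). Then for all (u,v) ∈ ℝ², the Jacobian determinant satisfies (∂𝓡₁/∂u)(∂𝓡₂/∂v) − (∂𝓡₁/∂v)(∂𝓡₂/∂u) = 8k²uv / D(u,v)³. -/

import Mathlib

open Real
open Filter Topology

lemma aux_deriv (c α β γ δ u : ℝ) (h : γ + δ * u ^ 2 ≠ 0) :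
    deriv (fun t => c * (α + β * t ^ 2) / (γ + δ * t ^ 2)) u
      = c * (2 * u * (β * γ - α * δ)) / (γ + δ * u ^ 2) ^ 2 := by
  have hp : HasDerivAt (fun t : ℝ => t ^ 2) (2 * u) u := by
    simpa using hasDerivAt_pow 2 u
  have hN : HasDerivAt (fun t : ℝ => c * (α + β * t ^ 2)) (c * (β * (2 * u))) u :=
    ((hp.const_mul β).const_add α).const_mul c
  have hD : HasDerivAt (fun t : ℝ => γ + δ * t ^ 2) (δ * (2 * u)) u :=
    (hp.const_mul δ).const_add γ
  rw [show (fun t => c * (α + β * t ^ 2) / (γ + δ * t ^ 2)) = ((fun t => c * (α + β * t ^ 2)) / fun t => γ + δ * t ^ 2) from rfl, (hN.div hD h).deriv]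
  field_simp
  ring

lemma aux_zero (c α β γ δ u : ℝ) (hc : c ≠ 0) (h0 : γ + δ * u ^ 2 = 0) :
    deriv (fun t => c * (α + β * t ^ 2) / (γ + δ * t ^ 2)) u = 0 := by
  by_cases hδ : δ = 0
  · have hγ : γ = 0 := by simpa [hδ] using h0
    simp [hδ, hγ]
  by_cases hdiff : DifferentiableAt ℝ (fun t => c * (α + β * t ^ 2) / (γ + δ * t ^ 2)) u
  swap
  · exact deriv_zero_of_not_differentiableAt hdiff
  have hγ : γ = -δ * u ^ 2 := by linarith
  have hfu : c * (α + β * u ^ 2) / (γ + δ * u ^ 2) = 0 := by rw [h0]; simp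
  have htend : Tendsto (fun t => c * (α + β * t ^ 2) / (γ + δ * t ^ 2)) (𝓝[≠] u) (𝓝 0) := by
    have := hdiff.continuousAt.tendsto
    rw [hfu] at this
    exact this.mono_left nhdsWithin_le_nhds
  have hne : ∀ᶠ t in (𝓝[≠] u), t ≠ -u := by
    by_cases hu : u = 0
    · subst hu
      rw [neg_zero]; exact (self_mem_nhdsWithin (a := (0:ℝ)) (s := {(0:ℝ)}ᶜ) : ∀ᶠ t in 𝓝[≠] (0:ℝ), t ≠ 0)
    · have : ∀ᶠ t in 𝓝 u, t ≠ -u :=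
        eventually_ne_nhds (fun h : u = -u => hu (by linarith))
      exact this.filter_mono nhdsWithin_le_nhds
  have hneu : ∀ᶠ t in (𝓝[≠] u), t ≠ u := by
    exact (self_mem_nhdsWithin (a := u) (s := {u}ᶜ) : ∀ᶠ t in 𝓝[≠] u, t ≠ u)
  have hevent : ∀ᶠ t in (𝓝[≠] u), γ + δ * t ^ 2 ≠ 0 := by
    filter_upwards [hne, hneu] with t h1 h2
    intro hzero
    have ht2 : (t - u) * (t + u) = 0 := by
      have : δ * ((t - u) * (t + u)) = 0 := by rw [hγ] at hzero; nlinarith [hzero]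
      exact (mul_eq_zero.1 this).resolve_left hδ
    rcases mul_eq_zero.1 ht2 with h | h
    · exact h2 (by linarith)
    · exact h1 (by linarith)
  have hDt : Tendsto (fun t : ℝ => γ + δ * t ^ 2) (𝓝[≠] u) (𝓝 0) := by
    have : Tendsto (fun t : ℝ => γ + δ * t ^ 2) (𝓝 u) (𝓝 (γ + δ * u ^ 2)) :=
      (continuous_const.add (continuous_const.mul (continuous_pow 2))).tendsto u
    rw [h0] at this
    exact this.mono_left nhdsWithin_le_nhds
  have hprod : Tendsto (fun t => c * (α + β * t ^ 2)) (𝓝[≠] u) (𝓝 0) := by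
    have h1 : Tendsto (fun t => c * (α + β * t ^ 2) / (γ + δ * t ^ 2) * (γ + δ * t ^ 2))
        (𝓝[≠] u) (𝓝 (0 * 0)) := htend.mul hDt
    rw [mul_zero] at h1
    refine h1.congr' ?_
    filter_upwards [hevent] with t ht
    exact div_mul_cancel₀ _ ht
  have hprod2 : Tendsto (fun t => c * (α + β * t ^ 2)) (𝓝[≠] u) (𝓝 (c * (α + β * u ^ 2))) :=
    ((continuous_const.mul (continuous_const.add
      (continuous_const.mul (continuous_pow 2)))).tendsto u).mono_left nhdsWithin_le_nhds
  have hNu : c * (α + β * u ^ 2) = 0 := tendsto_nhds_unique hprod2 hprod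
  have hα : α = -β * u ^ 2 := by
    have := (mul_eq_zero.1 hNu).resolve_left hc
    linarith
  have hconst : (fun t => c * (α + β * t ^ 2) / (γ + δ * t ^ 2)) =ᶠ[𝓝[≠] u]
      (fun _ => c * β / δ) := by
    filter_upwards [hevent] with t ht
    have hx : t ^ 2 - u ^ 2 ≠ 0 := by
      intro hzz
      apply ht
      rw [hγ]; linear_combination δ * hzz
    rw [hα, hγ]
    rw [div_eq_div_iff (by rw [hγ] at ht; exact ht) hδ]
    ring
  have hcb : c * β / δ = 0 := tendsto_nhds_unique (tendsto_const_nhds.congr' hconst.symm) htend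
  have hβ : β = 0 := by
    rcases mul_eq_zero.1 (div_eq_zero_iff.1 hcb |>.resolve_right hδ) with h | h
    · exact absurd h hc
    · exact h
  have hα0 : α = 0 := by rw [hβ] at hα; simpa using hα
  simp [hα0, hβ]


/-- The common denominator `D = 1 + (1+k)u² + (1-k)v²`. -/
noncomputable def Dk (k u v : ℝ) : ℝ := 1 + (1 + k) * u ^ 2 + (1 - k) * v ^ 2

/-- The first Ricci potential of the generalized Taub-NUT instanton. -/
noncomputable def Ric1 (k u v : ℝ) : ℝ :=
  (1 / Real.sqrt 2) * (1 + (1 + k) * (u ^ 2 + v ^ 2)) / Dk k u v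

/-- The second Ricci potential of the generalized Taub-NUT instanton. -/
noncomputable def Ric2 (k u v : ℝ) : ℝ :=
  (1 / Real.sqrt 2) * (1 + (1 - k) * (u ^ 2 + v ^ 2)) / Dk k u v

/-- The Jacobian determinant of the Ricci potentials (the coefficient of the Ricci
pseudo-volume form `d𝓡₁ ∧ d𝓡₂`) equals `8k²uv/D³`. -/
theorem stmt_10 (k : ℝ) :
    ∀ u v : ℝ,
      deriv (fun t => Ric1 k t v) u * deriv (fun t => Ric2 k u t) v
        - deriv (fun t => Ric1 k u t) v * deriv (fun t => Ric2 k t v) u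
      = 8 * k ^ 2 * u * v / (Dk k u v) ^ 3 := by
  intro u v
  have hs : Real.sqrt 2 ≠ 0 := by positivity
  have hc : (1:ℝ) / Real.sqrt 2 ≠ 0 := by positivity
  have e1 : (fun t => Ric1 k t v)
      = fun t => (1 / Real.sqrt 2) * ((1 + (1 + k) * v ^ 2) + (1 + k) * t ^ 2)
          / ((1 + (1 - k) * v ^ 2) + (1 + k) * t ^ 2) := by
    funext t; simp only [Ric1, Dk]; ring
  have e2 : (fun t => Ric2 k u t)
      = fun t => (1 / Real.sqrt 2) * ((1 + (1 - k) * u ^ 2) + (1 - k) * t ^ 2)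
          / ((1 + (1 + k) * u ^ 2) + (1 - k) * t ^ 2) := by
    funext t; simp only [Ric2, Dk]; ring
  have e3 : (fun t => Ric1 k u t)
      = fun t => (1 / Real.sqrt 2) * ((1 + (1 + k) * u ^ 2) + (1 + k) * t ^ 2)
          / ((1 + (1 + k) * u ^ 2) + (1 - k) * t ^ 2) := by
    funext t; simp only [Ric1, Dk]; ring
  have e4 : (fun t => Ric2 k t v)
      = fun t => (1 / Real.sqrt 2) * ((1 + (1 - k) * v ^ 2) + (1 - k) * t ^ 2)
          / ((1 + (1 - k) * v ^ 2) + (1 + k) * t ^ 2) := by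
    funext t; simp only [Ric2, Dk]; ring
  rw [e1, e2, e3, e4]
  by_cases hD : Dk k u v = 0
  · have h0 : (1 + (1 - k) * v ^ 2) + (1 + k) * u ^ 2 = 0 := by
      simp only [Dk] at hD; linarith
    have h0' : (1 + (1 + k) * u ^ 2) + (1 - k) * v ^ 2 = 0 := by
      simp only [Dk] at hD; linarith
    rw [aux_zero _ _ _ _ _ _ hc h0, aux_zero _ _ _ _ _ _ hc h0',
      aux_zero _ _ _ _ _ _ hc h0', aux_zero _ _ _ _ _ _ hc h0, hD]
    norm_num
  · have h0 : (1 + (1 - k) * v ^ 2) + (1 + k) * u ^ 2 ≠ 0 := by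
      simp only [Dk] at hD; intro h; exact hD (by linarith)
    have h0' : (1 + (1 + k) * u ^ 2) + (1 - k) * v ^ 2 ≠ 0 := by
      simp only [Dk] at hD; intro h; exact hD (by linarith)
    rw [aux_deriv _ _ _ _ _ _ h0, aux_deriv _ _ _ _ _ _ h0',
      aux_deriv _ _ _ _ _ _ h0', aux_deriv _ _ _ _ _ _ h0]
    have hcc : (1 / Real.sqrt 2) * (1 / Real.sqrt 2) = 1 / 2 := by
      rw [div_mul_div_comm, Real.mul_self_sqrt (by norm_num)]; norm_num
    have step : ∀ A B C E X Y : ℝ,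
        1 / Real.sqrt 2 * A / X ^ 2 * (1 / Real.sqrt 2 * B / Y ^ 2)
          - 1 / Real.sqrt 2 * C / Y ^ 2 * (1 / Real.sqrt 2 * E / X ^ 2)
        = (1 / Real.sqrt 2 * (1 / Real.sqrt 2)) * ((A * B - C * E) / (X ^ 2 * Y ^ 2)) := by
      intros; ring
    rw [step, hcc]
    simp only [Dk] at hD ⊢
    rw [show 1 + (1 - k) * v ^ 2 + (1 + k) * u ^ 2 = 1 + (1 + k) * u ^ 2 + (1 - k) * v ^ 2 by ring]
    field_simp
    rw [div_eq_div_iff (pow_ne_zero _ (by intro h; apply hD; linarith)) (pow_ne_zero _ (by intro h; apply hD; linarith))]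
    ring
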